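/- (DasGupta's formula) Let Φ denote the cumulative distribution function of the standard normal N(0,1). If (t_n)_{n≥2} is a sequence of reals satisfying Φ(t_n) = 1 − 1/n for each n ≥ 2, then t_n / √(2·ln(n)) → 1 as n → ∞; that is, Φ^{−1}(1 − 1/n) ~ √(2·ln(n)) as n → ∞. -/

import Mathlib

open MeasureTheory ProbabilityTheory Filter Real Set

lemma hasDerivAt_negexp (x : ℝ) :
    HasDerivAt (fun x : ℝ => -Real.exp (-x^2/2)) (x * Real.exp (-x^2/2)) x := by
  have h1 : HasDerivAt (fun x : ℝ => -x^2/2) (-x) x := by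
    have := ((hasDerivAt_pow 2 x).neg.div_const 2)
    exact this.congr_deriv (by push_cast; ring)
  have := (h1.exp).neg
  exact this.congr_deriv (by ring)

lemma tendsto_negexp : Tendsto (fun x : ℝ => -Real.exp (-x^2/2)) atTop (nhds 0) := by
  rw [show (0:ℝ) = -0 by ring]
  refine Tendsto.neg ?_
  refine Real.tendsto_exp_atBot.comp ?_
  have h : Tendsto (fun x : ℝ => x^2/2) atTop atTop :=
    (tendsto_pow_atTop two_ne_zero).atTop_div_const (by norm_num)
  have := tendsto_neg_atTop_atBot.comp h
  refine this.congr (fun x => by simp [Function.comp]; ring)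

lemma integral_x_exp (s : ℝ) (hs : 0 ≤ s) :
    ∫ x in Ioi s, x * Real.exp (-x^2/2) = Real.exp (-s^2/2) := by
  have h := integral_Ioi_of_hasDerivAt_of_nonneg (g := fun x => -Real.exp (-x^2/2))
    (g' := fun x => x * Real.exp (-x^2/2)) (a := s) (l := 0)
    (Continuous.continuousWithinAt (by continuity))
    (fun x _ => hasDerivAt_negexp x)
    (fun x hx => by have hx' : 0 < x := lt_of_le_of_lt hs hx; positivity)
    tendsto_negexp
  rw [h]; ring

lemma integrableOn_x_exp (s : ℝ) (hs : 0 ≤ s) :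
    IntegrableOn (fun x => x * Real.exp (-x^2/2)) (Ioi s) :=
  integrableOn_Ioi_deriv_of_nonneg (Continuous.continuousWithinAt (by continuity))
    (fun x _ => hasDerivAt_negexp x)
    (fun x hx => by have hx' : 0 < x := lt_of_le_of_lt hs hx; positivity)
    tendsto_negexp

noncomputable def Kc : ℝ := (Real.sqrt (2 * π))⁻¹

lemma Kc_pos : 0 < Kc := by rw [Kc]; positivity

lemma pdf_eq (x : ℝ) : gaussianPDFReal 0 1 x = Kc * Real.exp (-x^2/2) := by
  simp [gaussianPDFReal, Kc]

noncomputable def Q (s : ℝ) : ℝ := ((gaussianReal 0 1) (Ioi s)).toReal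

lemma Q_eq (s : ℝ) : Q s = ∫ x in Ioi s, gaussianPDFReal 0 1 x := by
  rw [Q, gaussianReal_apply_eq_integral 0 one_ne_zero,
    ENNReal.toReal_ofReal (setIntegral_nonneg measurableSet_Ioi
      (fun x _ => gaussianPDFReal_nonneg 0 1 x))]

lemma Q_anti {a b : ℝ} (h : a ≤ b) : Q b ≤ Q a :=
  ENNReal.toReal_mono (measure_ne_top _ _) (measure_mono (Ioi_subset_Ioi h))

lemma Q_upper {s : ℝ} (hs : 1 ≤ s) : Q s ≤ Kc * Real.exp (-s^2/2) := by
  have h0 : (0:ℝ) ≤ s := le_trans zero_le_one hs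
  rw [Q_eq]
  calc ∫ x in Ioi s, gaussianPDFReal 0 1 x
      ≤ ∫ x in Ioi s, Kc * (x * Real.exp (-x^2/2)) := by
        refine setIntegral_mono_on ((integrable_gaussianPDFReal 0 1).integrableOn)
          ((integrableOn_x_exp s h0).const_mul Kc) measurableSet_Ioi (fun x hx => ?_)
        rw [pdf_eq]
        have hx1 : 1 ≤ x := le_trans hs (le_of_lt hx)
        have : Real.exp (-x^2/2) ≤ x * Real.exp (-x^2/2) :=
          le_mul_of_one_le_left (Real.exp_nonneg _) hx1
        nlinarith [Kc_pos, Real.exp_nonneg (-x^2/2)]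
    _ = Kc * Real.exp (-s^2/2) := by
        rw [integral_const_mul, integral_x_exp s h0]

lemma Q_lower {s : ℝ} (hs : 0 ≤ s) : Kc * Real.exp (-(s+1)^2/2) ≤ Q s := by
  rw [Q_eq]
  have hsub : Ioc s (s+1) ⊆ Ioi s := Ioc_subset_Ioi_self
  have h1 : Kc * Real.exp (-(s+1)^2/2) ≤ ∫ x in Ioc s (s+1), gaussianPDFReal 0 1 x := by
    have hmono : ∫ _ in Ioc s (s+1), Kc * Real.exp (-(s+1)^2/2)
        ≤ ∫ x in Ioc s (s+1), gaussianPDFReal 0 1 x := by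
      refine setIntegral_mono_on (integrableOn_const (by simp))
        ((integrable_gaussianPDFReal 0 1).integrableOn) measurableSet_Ioc
        (fun x hx => ?_)
      rw [pdf_eq]
      have hx2 : x^2 ≤ (s+1)^2 := by nlinarith [hx.1, hx.2]
      have : Real.exp (-(s+1)^2/2) ≤ Real.exp (-x^2/2) :=
        Real.exp_le_exp.2 (by linarith)
      nlinarith [Kc_pos]
    calc Kc * Real.exp (-(s+1)^2/2)
        = (volume (Ioc s (s+1))).toReal • (Kc * Real.exp (-(s+1)^2/2)) := by
          simp [Real.volume_Ioc]
      _ = ∫ _ in Ioc s (s+1), Kc * Real.exp (-(s+1)^2/2) := by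
          rw [setIntegral_const]; rfl
      _ ≤ _ := hmono
  refine le_trans h1 (setIntegral_mono_set ((integrable_gaussianPDFReal 0 1).integrableOn)
    (Eventually.of_forall (fun x => gaussianPDFReal_nonneg 0 1 x)) (HasSubset.Subset.eventuallyLE hsub))

lemma Phi_Q (u : ℝ) : ((gaussianReal 0 1) (Set.Iic u)).toReal = 1 - Q u := by
  have hu : ((gaussianReal 0 1) (Set.Iic u)).toReal + Q u = 1 := by
    rw [Q, ← ENNReal.toReal_add (measure_ne_top _ _) (measure_ne_top _ _),
      ← measure_union (Iic_disjoint_Ioi le_rfl) measurableSet_Ioi, Iic_union_Ioi,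
      measure_univ, ENNReal.toReal_one]
  linarith

lemma tendsto_sqrt : Tendsto Real.sqrt atTop atTop := by
  refine tendsto_atTop_atTop.2 (fun b => ⟨max 0 (b^2), fun a ha => ?_⟩)
  calc b ≤ |b| := le_abs_self b
    _ = Real.sqrt (b^2) := (Real.sqrt_sq_eq_abs b).symm
    _ ≤ Real.sqrt a := Real.sqrt_le_sqrt (le_trans (le_max_right _ _) ha)

lemma tendsto_aux {a b : ℝ} (ha : 0 < a) :
    Tendsto (fun L : ℝ => a * L - b * Real.sqrt (2 * L)) atTop atTop := by
  have h2 : Tendsto (fun L : ℝ => a * Real.sqrt L - b * Real.sqrt 2) atTop atTop := by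
    have := tendsto_atTop_add_const_right atTop (-(b * Real.sqrt 2))
      (tendsto_sqrt.const_mul_atTop ha)
    simpa [sub_eq_add_neg] using this
  have h3 := tendsto_sqrt.atTop_mul_atTop₀ h2
  refine h3.congr' ?_
  filter_upwards [eventually_ge_atTop (0:ℝ)] with L hL
  rw [Real.sqrt_mul (by norm_num : (0:ℝ) ≤ 2) L]
  have := Real.mul_self_sqrt hL
  ring_nf
  nlinarith [Real.sqrt_nonneg L, Real.sqrt_nonneg 2]


/-- DasGupta's formula: if `Φ(t_n) = 1 − 1/n` for each `n ≥ 2`, where `Φ` is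
the standard normal cdf, then `t_n / √(2·ln n) → 1` as `n → ∞`; that is,
`Φ⁻¹(1 − 1/n) ~ √(2·ln n)`. -/
theorem dasgupta_formula (Φ : ℝ → ℝ)
    (hΦ : ∀ t, Φ t = ((gaussianReal 0 1) (Set.Iic t)).toReal)
    (t : ℕ → ℝ) (ht : ∀ n : ℕ, 2 ≤ n → Φ (t n) = 1 - 1 / (n : ℝ)) :
    Tendsto (fun n : ℕ => t n / Real.sqrt (2 * Real.log (n : ℝ)))
      atTop (nhds 1) := by
  have hQt : ∀ n : ℕ, 2 ≤ n → Q (t n) = 1 / (n : ℝ) := by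
    intro n hn
    have h := ht n hn
    rw [hΦ, Phi_Q] at h
    linarith
  have hlog : Tendsto (fun n : ℕ => Real.log n) atTop atTop :=
    Real.tendsto_log_atTop.comp tendsto_natCast_atTop_atTop
  rw [tendsto_order]
  constructor
  · -- c < 1 : eventually c < t n / √(2 log n)
    intro c hc
    set c' := max c 0 with hc'def
    have hc'0 : 0 ≤ c' := le_max_right _ _
    have hc'1 : c' < 1 := max_lt hc zero_lt_one
    have hten : Tendsto (fun L : ℝ => (1 - c'^2) * L - c' * Real.sqrt (2*L)) atTop atTop :=
      tendsto_aux (by nlinarith)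
    filter_upwards [(hten.comp hlog).eventually_gt_atTop (1/2 - Real.log Kc),
      eventually_ge_atTop 2, hlog.eventually_ge_atTop 1] with n h1 h2 h3
    simp only [Function.comp] at h1
    set L := Real.log n with hLdef
    have hL1 : (1:ℝ) ≤ L := h3
    have hsqpos : 0 < Real.sqrt (2*L) := Real.sqrt_pos.2 (by linarith)
    set s := c' * Real.sqrt (2*L) with hsdef
    have hs0 : 0 ≤ s := mul_nonneg hc'0 hsqpos.le
    have hn0 : (0:ℝ) < n := by exact_mod_cast lt_of_lt_of_le two_pos h2
    have key : (1:ℝ)/n < Kc * Real.exp (-(s+1)^2/2) := by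
      have h1n : (1:ℝ)/n = Real.exp (-L) := by
        rw [Real.exp_neg, Real.exp_log hn0, one_div]
      have hKe : Kc * Real.exp (-(s+1)^2/2) = Real.exp (Real.log Kc + -(s+1)^2/2) := by
        rw [Real.exp_add, Real.exp_log Kc_pos]
      rw [h1n, hKe, Real.exp_lt_exp]
      have hsqv : (Real.sqrt (2*L))^2 = 2*L := Real.sq_sqrt (by linarith)
      nlinarith [h1]
    have hlt : Q (t n) < Q s := by
      rw [hQt n h2]
      exact lt_of_lt_of_le key (Q_lower hs0)
    have hst : s < t n := by
      by_contra hcon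
      push_neg at hcon
      exact absurd (Q_anti hcon) (not_le.2 hlt)
    rw [lt_div_iff₀ hsqpos]
    calc c * Real.sqrt (2*L) ≤ c' * Real.sqrt (2*L) :=
          mul_le_mul_of_nonneg_right (le_max_left _ _) hsqpos.le
      _ < t n := hst
  · -- c > 1 : eventually t n / √(2 log n) < c
    intro c hc
    have hc2 : (0:ℝ) < c^2 - 1 := by nlinarith
    have hten : Tendsto (fun n : ℕ => (c^2 - 1) * Real.log n) atTop atTop :=
      hlog.const_mul_atTop hc2
    filter_upwards [hten.eventually_gt_atTop (Real.log Kc),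
      eventually_ge_atTop 2, hlog.eventually_ge_atTop 1] with n h1 h2 h3
    set L := Real.log n with hLdef
    have hL1 : (1:ℝ) ≤ L := h3
    have hsqpos : 0 < Real.sqrt (2*L) := Real.sqrt_pos.2 (by linarith)
    have hsq1 : (1:ℝ) ≤ Real.sqrt (2*L) := by
      calc (1:ℝ) = Real.sqrt 1 := Real.sqrt_one.symm
        _ ≤ Real.sqrt (2*L) := Real.sqrt_le_sqrt (by linarith)
    set s := c * Real.sqrt (2*L) with hsdef
    have hs1 : (1:ℝ) ≤ s := by nlinarith
    have hn0 : (0:ℝ) < n := by exact_mod_cast lt_of_lt_of_le two_pos h2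
    have key : Kc * Real.exp (-s^2/2) < (1:ℝ)/n := by
      have h1n : (1:ℝ)/n = Real.exp (-L) := by
        rw [Real.exp_neg, Real.exp_log hn0, one_div]
      have hKe : Kc * Real.exp (-s^2/2) = Real.exp (Real.log Kc + -s^2/2) := by
        rw [Real.exp_add, Real.exp_log Kc_pos]
      rw [h1n, hKe, Real.exp_lt_exp]
      have hsqv : (Real.sqrt (2*L))^2 = 2*L := Real.sq_sqrt (by linarith)
      nlinarith [h1]
    have hlt : Q s < Q (t n) := by
      rw [hQt n h2]
      exact lt_of_le_of_lt (Q_upper hs1) key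
    have hst : t n < s := by
      by_contra hcon
      push_neg at hcon
      exact absurd (Q_anti hcon) (not_le.2 hlt)
    rw [div_lt_iff₀ hsqpos]
    exact hst
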